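/- Fix T ∈ ℝ^{(m·n)×(m·n)}, λ > 0, μ ≥ 0 and a tuple B = (B_1,…,B_k) of n×n matrices. Then the function A ↦ F_{λ,μ}(A,B) has a unique global minimizer: there exists exactly one A* ∈ (ℝ^{m×m})^k such that F_{λ,μ}(A*,B) ≤ F_{λ,μ}(A,B) for all A ∈ (ℝ^{m×m})^k. -/
import Mathlib


open Matrix Kronecker

/-- Spectral norm (ℓ²→ℓ² operator norm) of a real matrix. -/
noncomputable def specNorm {p q : Type*} [Fintype p] [Fintype q] [DecidableEq q]
    (S : Matrix p q ℝ) : ℝ :=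
  ‖LinearMap.toContinuousLinearMap (Matrix.toEuclideanLin S)‖

/-- Frobenius norm of a real matrix. -/
noncomputable def frobNorm {p q : Type*} [Fintype p] [Fintype q] (S : Matrix p q ℝ) : ℝ :=
  Real.sqrt (∑ i, ∑ j, (S i j) ^ 2)

/-- The regularized cost function
`F_{λ,μ}(A,B) = ‖T − ∑ⱼ Aⱼ ⊗ Bⱼ‖₂ + λ ∑ⱼ ‖Aⱼ‖_F² + μ ∑ⱼ ‖Bⱼ‖_F²`. -/
noncomputable def F (m n k : ℕ) (T : Matrix (Fin m × Fin n) (Fin m × Fin n) ℝ)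
    (lam mu : ℝ) (A : Fin k → Matrix (Fin m) (Fin m) ℝ)
    (B : Fin k → Matrix (Fin n) (Fin n) ℝ) : ℝ :=
  specNorm (T - ∑ j, (A j) ⊗ₖ (B j)) + lam * ∑ j, frobNorm (A j) ^ 2
    + mu * ∑ j, frobNorm (B j) ^ 2

/-- The linear map `A ↦ ∑ⱼ Aⱼ ⊗ Bⱼ`. -/
noncomputable def kronL {m n k : ℕ} (B : Fin k → Matrix (Fin n) (Fin n) ℝ) :
    (Fin k → Matrix (Fin m) (Fin m) ℝ) →ₗ[ℝ] Matrix (Fin m × Fin n) (Fin m × Fin n) ℝ where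
  toFun A := ∑ j, (A j) ⊗ₖ (B j)
  map_add' x y := by
    simp [Matrix.add_kronecker, Finset.sum_add_distrib]
  map_smul' c x := by
    simp [Matrix.smul_kronecker, Finset.smul_sum]

/-- The linear map realizing `specNorm` as a norm of a linear image. -/
noncomputable def specL (p : Type*) [Fintype p] [DecidableEq p] :
    Matrix p p ℝ →ₗ[ℝ] (EuclideanSpace ℝ p →L[ℝ] EuclideanSpace ℝ p) :=
  (LinearMap.toContinuousLinearMap (𝕜 := ℝ)
      (E := EuclideanSpace ℝ p) (F' := EuclideanSpace ℝ p)).toLinearMap.comp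
    (Matrix.toEuclideanLin (𝕜 := ℝ) (m := p) (n := p)).toLinearMap

lemma specNorm_eq {p : Type*} [Fintype p] [DecidableEq p] (S : Matrix p p ℝ) :
    specNorm S = ‖specL p S‖ := rfl

lemma specNorm_add_le {p : Type*} [Fintype p] [DecidableEq p] (X Y : Matrix p p ℝ) :
    specNorm (X + Y) ≤ specNorm X + specNorm Y := by
  rw [specNorm_eq, specNorm_eq, specNorm_eq, map_add]
  exact norm_add_le _ _

lemma specNorm_smul {p : Type*} [Fintype p] [DecidableEq p] (c : ℝ) (X : Matrix p p ℝ) :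
    specNorm (c • X) = |c| * specNorm X := by
  rw [specNorm_eq, specNorm_eq, _root_.map_smul]
  exact (norm_smul c ((specL p) X)).trans (by rw [Real.norm_eq_abs])

lemma specNorm_nonneg {p : Type*} [Fintype p] [DecidableEq p] (X : Matrix p p ℝ) :
    0 ≤ specNorm X := by
  rw [specNorm_eq]; exact norm_nonneg _

/-- For `λ > 0` and fixed `B`, the function `A ↦ F_{λ,μ}(A,B)` has a unique
global minimizer. -/
theorem F_unique_minimizer_in_A (m n k : ℕ) (hm : 0 < m) (hn : 0 < n) (hk : 0 < k)
    (T : Matrix (Fin m × Fin n) (Fin m × Fin n) ℝ)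
    (lam mu : ℝ) (hlam : 0 < lam) (hmu : 0 ≤ mu)
    (B : Fin k → Matrix (Fin n) (Fin n) ℝ) :
    ∃! Astar : Fin k → Matrix (Fin m) (Fin m) ℝ,
      ∀ A : Fin k → Matrix (Fin m) (Fin m) ℝ,
        F m n k T lam mu Astar B ≤ F m n k T lam mu A B := by
  classical
  -- the quadratic part
  set q : (Fin k → Matrix (Fin m) (Fin m) ℝ) → ℝ := fun A => ∑ x : Fin k × Fin m × Fin m, (A x.1 x.2.1 x.2.2) ^ 2 with hqdef
  have hq_nonneg : ∀ A : (Fin k → Matrix (Fin m) (Fin m) ℝ), 0 ≤ q A := fun A =>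
    Finset.sum_nonneg fun x _ => sq_nonneg _
  have hfrob : ∀ A : (Fin k → Matrix (Fin m) (Fin m) ℝ), (∑ j, frobNorm (A j) ^ 2) = q A := by
    intro A
    show (∑ j, frobNorm (A j) ^ 2)
      = ∑ x : Fin k × Fin m × Fin m, (A x.1 x.2.1 x.2.2) ^ 2
    rw [Fintype.sum_prod_type]
    refine Finset.sum_congr rfl fun j _ => ?_
    rw [frobNorm, Real.sq_sqrt (by positivity), Fintype.sum_prod_type]
  -- the spectral part
  set g : (Fin k → Matrix (Fin m) (Fin m) ℝ) → ℝ := fun A => specNorm (T - kronL B A) with hgdef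
  have hg_nonneg : ∀ A : (Fin k → Matrix (Fin m) (Fin m) ℝ), 0 ≤ g A := fun A => specNorm_nonneg _
  set C : ℝ := mu * ∑ j, frobNorm (B j) ^ 2 with hCdef
  have hC_nonneg : 0 ≤ C := by
    refine mul_nonneg hmu (Finset.sum_nonneg fun j _ => sq_nonneg _)
  have hF : ∀ A : (Fin k → Matrix (Fin m) (Fin m) ℝ), F m n k T lam mu A B = g A + lam * q A + C := by
    intro A
    rw [F, hgdef, hfrob]
    rfl
  -- continuity
  have hqc : Continuous q := by
    refine continuous_finset_sum _ fun x _ => ?_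
    exact ((continuous_apply x.1).matrix_elem x.2.1 x.2.2).pow 2
  have hgc : Continuous g := by
    have h1 : Continuous fun A : (Fin k → Matrix (Fin m) (Fin m) ℝ) => kronL B A :=
      (kronL B).continuous_of_finiteDimensional
    have h2 : Continuous fun S : Matrix (Fin m × Fin n) (Fin m × Fin n) ℝ => specNorm S := by
      have := (specL (Fin m × Fin n)).continuous_of_finiteDimensional
      exact this.norm
    exact h2.comp (continuous_const.sub h1)
  have hFc : Continuous fun A : (Fin k → Matrix (Fin m) (Fin m) ℝ) => F m n k T lam mu A B := by
    simp only [hF]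
    exact (hgc.add ((continuous_const.mul hqc))).add continuous_const
  -- coercivity of q
  have hqt : Filter.Tendsto q (Filter.cocompact (Fin k → Matrix (Fin m) (Fin m) ℝ)) Filter.atTop := by
    rw [Filter.tendsto_atTop]
    intro b
    have hK : IsCompact {A : (Fin k → Matrix (Fin m) (Fin m) ℝ) | q A ≤ b} := by
      have hS : IsCompact (Set.pi Set.univ fun _ : Fin k =>
          (Set.pi Set.univ fun _ : Fin m =>
            (Set.pi Set.univ fun _ : Fin m => Set.Icc (-Real.sqrt b) (Real.sqrt b)))) :=
        isCompact_univ_pi fun _ => isCompact_univ_pi fun _ =>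
          isCompact_univ_pi fun _ => isCompact_Icc
      refine hS.of_isClosed_subset (IsClosed.preimage hqc isClosed_Iic) ?_
      intro A hA
      intro j _ ; intro i _ ; intro i' _
      have hsq : (A j i i') ^ 2 ≤ b := by
        have := Finset.single_le_sum (f := fun x : Fin k × Fin m × Fin m =>
          (A x.1 x.2.1 x.2.2) ^ 2) (fun x _ => sq_nonneg _)
          (Finset.mem_univ (j, i, i'))
        exact le_trans this hA
      have habs : |A j i i'| ≤ Real.sqrt b := by
        have := Real.sqrt_le_sqrt hsq
        rwa [Real.sqrt_sq_eq_abs] at this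
      exact abs_le.mp habs
    rw [Filter.eventually_iff, Filter.hasBasis_cocompact.mem_iff]
    exact ⟨{A : (Fin k → Matrix (Fin m) (Fin m) ℝ) | q A ≤ b}, hK, fun A hA => le_of_lt (lt_of_not_ge (by simpa using hA))⟩
  -- coercivity of F
  have hFt : Filter.Tendsto (fun A : (Fin k → Matrix (Fin m) (Fin m) ℝ) => F m n k T lam mu A B)
      (Filter.cocompact (Fin k → Matrix (Fin m) (Fin m) ℝ)) Filter.atTop := by
    refine Filter.tendsto_atTop_mono (fun A => ?_) (hqt.const_mul_atTop hlam)
    rw [hF]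
    nlinarith [hg_nonneg A, hC_nonneg]
  -- existence
  obtain ⟨A0, hA0⟩ := hFc.exists_forall_le hFt
  refine ⟨A0, hA0, ?_⟩
  intro A' hA'
  by_contra hne
  have heq : F m n k T lam mu A' B = F m n k T lam mu A0 B :=
    le_antisymm (hA' A0) (hA0 A')
  -- the midpoint
  set Am : (Fin k → Matrix (Fin m) (Fin m) ℝ) := (1/2 : ℝ) • A0 + (1/2 : ℝ) • A' with hAm
  -- g is midpoint convex
  have hgmid : g Am ≤ (g A0 + g A') / 2 := by
    have hdec : T - kronL B Am
        = (1/2 : ℝ) • (T - kronL B A0) + (1/2 : ℝ) • (T - kronL B A') := by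
      rw [hAm, map_add, _root_.map_smul, _root_.map_smul]
      module
    have hg0 : g A0 = specNorm (T - kronL B A0) := rfl
    have hg1 : g A' = specNorm (T - kronL B A') := rfl
    have hgm : g Am = specNorm (T - kronL B Am) := rfl
    rw [hgm, hdec, hg0, hg1]
    have h1 := specNorm_add_le ((1/2 : ℝ) • (T - kronL B A0)) ((1/2 : ℝ) • (T - kronL B A'))
    rw [specNorm_smul, specNorm_smul, abs_of_nonneg (by norm_num : (0:ℝ) ≤ (1/2 : ℝ))] at h1
    linarith
  -- q is strictly midpoint convex
  have hx : ∃ x : Fin k × Fin m × Fin m, A0 x.1 x.2.1 x.2.2 ≠ A' x.1 x.2.1 x.2.2 := by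
    by_contra h
    push_neg at h
    apply hne
    funext j
    ext i i'
    exact (h (j, i, i')).symm
  have hAmx : ∀ x : Fin k × Fin m × Fin m,
      Am x.1 x.2.1 x.2.2 = (A0 x.1 x.2.1 x.2.2) / 2 + (A' x.1 x.2.1 x.2.2) / 2 := by
    intro x
    show ((1/2 : ℝ) • A0 + (1/2 : ℝ) • A') x.1 x.2.1 x.2.2 = _
    simp only [Pi.add_apply, Pi.smul_apply, Matrix.add_apply, Matrix.smul_apply, smul_eq_mul]
    ring
  have hqmid : q Am < (q A0 + q A') / 2 := by
    obtain ⟨x0, hx0⟩ := hx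
    have hlt : q Am < ∑ x : Fin k × Fin m × Fin m,
        ((A0 x.1 x.2.1 x.2.2) ^ 2 + (A' x.1 x.2.1 x.2.2) ^ 2) / 2 := by
      rw [hqdef]
      refine Finset.sum_lt_sum (fun x _ => ?_) ⟨x0, Finset.mem_univ x0, ?_⟩
      · rw [hAmx x]
        nlinarith [sq_nonneg (A0 x.1 x.2.1 x.2.2 - A' x.1 x.2.1 x.2.2)]
      · rw [hAmx x0]
        have hpos : 0 < (A0 x0.1 x0.2.1 x0.2.2 - A' x0.1 x0.2.1 x0.2.2) ^ 2 := by
          have h := sub_ne_zero.mpr hx0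
          positivity
        nlinarith
    calc q Am < ∑ x : Fin k × Fin m × Fin m,
          ((A0 x.1 x.2.1 x.2.2) ^ 2 + (A' x.1 x.2.1 x.2.2) ^ 2) / 2 := hlt
      _ = (q A0 + q A') / 2 := by
          rw [hqdef]
          simp only
          rw [← Finset.sum_div, Finset.sum_add_distrib]
  -- conclude
  have hmidlt : F m n k T lam mu Am B < F m n k T lam mu A0 B := by
    have heq' : g A' + lam * q A' + C = g A0 + lam * q A0 + C := by
      rw [← hF, ← hF]; exact heq
    rw [hF Am, hF A0]
    nlinarith [hgmid, hqmid, hlam]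
  exact absurd (hA0 Am) (not_le.mpr hmidlt)
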